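/- Let β : ℝ³ → ℝ be twice continuously differentiable and suppose that for all indices A, B ∈ {1,2,3} and all X ∈ ℝ³, ∂²β/∂X^A∂X^B (X) + δ_{AB} · Δβ(X) = 0, where Δβ = Σ_C ∂²β/∂(X^C)² is the Laplacian and δ_{AB} is the Kronecker delta. Then β is affine: there exist a ∈ ℝ³ and b ∈ ℝ such that β(X) = ⟨a, X⟩ + b for all X ∈ ℝ³. -/

import Mathlib

/-- Partial derivative of a scalar field on `ℝ³` in the `i`-th coordinate
direction. -/
noncomputable def pd (i : Fin 3) (f : (Fin 3 → ℝ) → ℝ) (X : Fin 3 → ℝ) : ℝ :=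
  fderiv ℝ f X (Pi.single i 1)

/-- Stress-free linearized isotropic growth distributions in dimension three:
if `β,_{AB} + δ_{AB} Δβ = 0` for all `A, B`, then `β` is affine. -/
theorem stress_free_linearized_growth_is_affine
    (β : (Fin 3 → ℝ) → ℝ) (hβ : ContDiff ℝ 2 β)
    (h : ∀ (A B : Fin 3) (X : Fin 3 → ℝ),
      pd A (pd B β) X + (if A = B then (1 : ℝ) else 0) * (∑ C, pd C (pd C β) X) = 0) :
    ∃ (a : Fin 3 → ℝ) (b : ℝ), ∀ X : Fin 3 → ℝ, β X = (∑ i, a i * X i) + b := by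
  -- Step 1: all second partials vanish
  have key : ∀ A B X, pd A (pd B β) X = 0 := by
    intro A B X
    have hS : (∑ C, pd C (pd C β) X) = 0 := by
      have h4 : ∑ A : Fin 3, (pd A (pd A β) X + ∑ C, pd C (pd C β) X) = 0 :=
        Finset.sum_eq_zero fun A _ => by simpa using h A A X
      rw [Finset.sum_add_distrib, Finset.sum_const] at h4
      simp at h4
      linarith
    by_cases hAB : A = B
    · subst hAB
      have := h A A X
      simp [hS] at this
      exact this
    · simpa [hAB] using h A B X
  -- pd B β is C¹
  have hpd : ∀ B : Fin 3, ContDiff ℝ 1 (pd B β) := by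
    intro B
    have h1 : (1 : WithTop ℕ∞) + 1 ≤ 2 := by norm_num
    exact (hβ.fderiv_right h1).clm_apply contDiff_const
  have hβd : Differentiable ℝ β := hβ.differentiable (by norm_num)
  -- fderiv of pd B β is zero
  have hz : ∀ (B : Fin 3) (X : Fin 3 → ℝ), fderiv ℝ (pd B β) X = 0 := by
    intro B X
    apply ContinuousLinearMap.coe_injective
    apply (Pi.basisFun ℝ (Fin 3)).ext
    intro i
    simp only [Pi.basisFun_apply, ContinuousLinearMap.coe_coe, ContinuousLinearMap.zero_apply, LinearMap.zero_apply, ContinuousLinearMap.coe_zero]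
    exact key i B X
  -- pd B β is constant
  have hconst : ∀ (B : Fin 3) (X : Fin 3 → ℝ), pd B β X = pd B β 0 := by
    intro B X
    exact is_const_of_fderiv_eq_zero ((hpd B).differentiable one_ne_zero) (hz B) X 0
  -- fderiv β is constant
  have hfc : ∀ X, fderiv ℝ β X = fderiv ℝ β 0 := by
    intro X
    apply ContinuousLinearMap.coe_injective
    apply (Pi.basisFun ℝ (Fin 3)).ext
    intro i
    simpa [Pi.basisFun_apply, pd] using hconst i X
  -- subtraction trick
  set L := fderiv ℝ β 0 with hL
  have hg : ∀ X : Fin 3 → ℝ, β X - L X = β 0 - L 0 := by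
    intro X
    refine is_const_of_fderiv_eq_zero (𝕜 := ℝ) (f := fun X => β X - L X)
      (hβd.sub L.differentiable) (fun Y => ?_) X 0
    rw [fderiv_fun_sub (hβd Y) (L.differentiable Y), L.fderiv, hfc Y]
    simp
  refine ⟨fun i => L (Pi.single i 1), β 0, fun X => ?_⟩
  have hX : β X = L X + β 0 := by
    have := hg X
    simp at this
    linarith
  rw [hX]
  congr 1
  have := L.toLinearMap.pi_apply_eq_sum_univ X
  simp only [ContinuousLinearMap.coe_coe] at this
  rw [this]
  refine Finset.sum_congr rfl fun i _ => ?_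
  have hs : (fun j => if i = j then (1:ℝ) else 0) = Pi.single i 1 := by
    ext j; simp [Pi.single_apply, eq_comm]
  rw [hs, smul_eq_mul, mul_comm]
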